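/- Let Γ be a finitely generated group and κ an algebraically closed field of characteristic zero. Let ρ₁ : Γ →* GL(V₁) and ρ₂ : Γ →* GL(V₂) be representations of Γ on finite-dimensional κ-vector spaces V₁, V₂ that are semisimple (i.e. V₁ and V₂ are semisimple as modules over the group algebra κ[Γ]). Then ρ₁ and ρ₂ are isomorphic — there exists a κ-linear isomorphism φ : V₁ ≃ V₂ such that φ ∘ ρ₁(g) = ρ₂(g) ∘ φ for all g ∈ Γ — if and only if their characters agree, i.e. tr(ρ₁(g)) = tr(ρ₂(g)) for every g ∈ Γ. -/

import Mathlib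

open LinearMap Module

section
variable {κ : Type*} [Field κ] {A : Type*} [Ring A] [Algebra κ A]

variable (κ) in
noncomputable def aSMul (M : Type*) [AddCommGroup M] [Module κ M] [Module A M]
    [IsScalarTower κ A M] (a : A) : M →ₗ[κ] M where
  toFun x := a • x
  map_add' := smul_add a
  map_smul' c x := smul_comm a c x

variable {M : Type*} [AddCommGroup M] [Module κ M] [Module A M] [IsScalarTower κ A M]
variable {N : Type*} [AddCommGroup N] [Module κ N] [Module A N] [IsScalarTower κ A N]

/-- trace is invariant under A-linear equivalence -/
theorem trace_aSMul_congr [FiniteDimensional κ M] (E : M ≃ₗ[A] N) (a : A) :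
    trace κ M (aSMul κ M a) = trace κ N (aSMul κ N a) := by
  let Eκ : M ≃ₗ[κ] N := E.restrictScalars κ
  have : Eκ.conj (aSMul κ M a) = aSMul κ N a := by
    ext x
    show Eκ (a • Eκ.symm x) = a • x
    rw [show Eκ (a • Eκ.symm x) = E (a • E.symm x) from rfl, map_smul,
      LinearEquiv.apply_symm_apply]
  rw [← this, LinearMap.trace_conj']

/-- additivity of trace over a complemented decomposition -/
theorem trace_aSMul_decomp [FiniteDimensional κ M] (p p' : Submodule A M)
    (hc : IsCompl p p') (a : A) :
    trace κ M (aSMul κ M a) =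
      trace κ ↥p (aSMul κ ↥p a) + trace κ ↥p' (aSMul κ ↥p' a) := by
  haveI : FiniteDimensional κ ↥p := inferInstanceAs (FiniteDimensional κ (p.restrictScalars κ))
  haveI : FiniteDimensional κ ↥p' := inferInstanceAs (FiniteDimensional κ (p'.restrictScalars κ))
  let E : (↥p × ↥p') ≃ₗ[A] M := Submodule.prodEquivOfIsCompl p p' hc
  rw [trace_aSMul_congr E.symm a]
  have : aSMul κ (↥p × ↥p') a = (aSMul κ ↥p a).prodMap (aSMul κ ↥p' a) := by
    ext x <;> rfl
  rw [show trace κ (↥p × ↥p') (aSMul κ (↥p × ↥p') a)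
      = trace κ (↥p × ↥p') ((aSMul κ ↥p a).prodMap (aSMul κ ↥p' a)) from by rw [this],
    LinearMap.trace_prodMap']
end

section
variable {κ : Type*} [Field κ] {A : Type*} [Ring A] [Algebra κ A]
  {W : Type*} [AddCommGroup W] [Module κ W] [Module A W] [IsScalarTower κ A W]

theorem pi_semisimple [IsSemisimpleModule A W] (n : ℕ) :
    IsSemisimpleModule A (Fin n → W) := by
  classical
  refine isSemisimpleModule_of_isSemisimpleModule_submodule'
    (p := fun i : Fin n => LinearMap.range (LinearMap.single A (fun _ : Fin n => W) i)) ?_ ?_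
  · intro i; exact IsSemisimpleModule.range _
  · simp_rw [LinearMap.range_eq_map, Submodule.iSup_map_single, Submodule.pi_top]

theorem prod_semisimple {N' : Type*} [AddCommGroup N'] [Module A N']
    [IsSemisimpleModule A W] [IsSemisimpleModule A N'] :
    IsSemisimpleModule A (W × N') := by
  have h : IsSemisimpleModule A
      ((LinearMap.range (LinearMap.inl A W N') ⊔ LinearMap.range (LinearMap.inr A W N') :
        Submodule A (W × N'))) :=
    IsSemisimpleModule.sup (IsSemisimpleModule.range _) (IsSemisimpleModule.range _)
  rw [LinearMap.sup_range_inl_inr] at h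
  exact IsSemisimpleModule.congr Submodule.topEquiv.symm

/-- Jacobson density, f.d. semisimple case: a κ-endomorphism commuting with all
A-endomorphisms is given by the action of some `a : A`. -/
theorem density [FiniteDimensional κ W] [IsSemisimpleModule A W]
    (e : W →ₗ[κ] W) (he : ∀ d : W →ₗ[A] W, ∀ x, d (e x) = e (d x)) :
    ∃ a : A, ∀ x, a • x = e x := by
  classical
  set n := finrank κ W
  let bb : Basis (Fin n) κ W := Module.finBasis κ W
  haveI : IsSemisimpleModule A (Fin n → W) := pi_semisimple n
  set w : Fin n → W := fun i => bb i with hw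
  set U : Submodule A (Fin n → W) := Submodule.span A {w} with hU
  obtain ⟨U', hc⟩ := exists_isCompl U
  set q : (Fin n → W) →ₗ[A] (Fin n → W) := U.subtype ∘ₗ U.projectionOnto U' hc with hq
  have hqU : ∀ x ∈ U, q x = x := by
    intro x hx
    simp [hq, Submodule.projectionOnto_apply_left hc ⟨x, hx⟩]
  have hq_mem : ∀ x, q x ∈ U := fun x => (U.projectionOnto U' hc x).2
  -- componentwise commuting
  set E : (Fin n → W) →ₗ[κ] (Fin n → W) := LinearMap.pi (fun i => e ∘ₗ LinearMap.proj i) with hE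
  have hcomm : ∀ x, q (E x) = E (q x) := by
    intro x
    have hx : x = ∑ j, LinearMap.single A (fun _ : Fin n => W) j (x j) := by
      ext i
      simp [Finset.sum_apply, Pi.single_apply]
    have key : ∀ (y : Fin n → W) (i : Fin n),
        (q y) i = ∑ j, (LinearMap.proj i ∘ₗ q ∘ₗ LinearMap.single A (fun _ : Fin n => W) j) (y j) := by
      intro y i
      conv_lhs => rw [show y = ∑ j, LinearMap.single A (fun _ : Fin n => W) j (y j) by
        ext i; simp [Finset.sum_apply, Pi.single_apply]]
      rw [map_sum]
      simp [Finset.sum_apply]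
    ext i
    have hEx : ∀ (y : Fin n → W) (j : Fin n), (E y) j = e (y j) := fun y j => rfl
    rw [hEx, key, key x i, map_sum]
    refine Finset.sum_congr rfl fun j _ => ?_
    have := he (LinearMap.proj i ∘ₗ q ∘ₗ LinearMap.single A (fun _ : Fin n => W) j) (x j)
    simp only [LinearMap.coe_comp, Function.comp_apply, LinearMap.proj_apply] at this
    simp only [LinearMap.coe_comp, Function.comp_apply, LinearMap.proj_apply]
    rw [show (E x) j = e (x j) from rfl, ← this]
  have hwU : w ∈ U := Submodule.mem_span_singleton_self w
  have hEwU : E w ∈ U := by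
    have : q (E w) = E w := by rw [hcomm, hqU w hwU]
    rw [← this]; exact hq_mem _
  have : E w ∈ (Submodule.span A {w} : Submodule A (Fin n → W)) := hEwU
  have h2 : (Submodule.span A {w} : Set (Fin n → W)) = Set.range fun a : A => a • w :=
    Submodule.span_singleton_eq_range A w
  have h3 : E w ∈ Set.range fun a : A => a • w := h2 ▸ this
  obtain ⟨a, ha⟩ := h3
  refine ⟨a, fun x => ?_⟩
  have hbasis : ∀ i, a • bb i = e (bb i) := by
    intro i
    have := congrFun ha i
    simpa [hE, hw] using this
  have : aSMul κ W a = e := by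
    refine bb.ext fun i => ?_
    simpa [aSMul] using hbasis i
  calc a • x = aSMul κ W a x := rfl
    _ = e x := by rw [this]
end

section
variable {A : Type*} [Ring A] {W : Type*} [AddCommGroup W] [Module A W]

theorem simple_le_sSup_iso [IsSemisimpleModule A W] {𝒮 : Set (Submodule A W)}
    (h𝒮 : ∀ m ∈ 𝒮, IsSimpleModule A ↥m)
    {p : Submodule A W} (hp : IsSimpleModule A p) (hle : p ≤ sSup 𝒮) :
    ∃ m ∈ 𝒮, Nonempty (↥m ≃ₗ[A] ↥p) := by
  obtain ⟨p', hc⟩ := exists_isCompl p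
  set π : W →ₗ[A] ↥p := p.linearProjOfIsCompl p' hc with hπ
  have hne : ∃ m ∈ 𝒮, π ∘ₗ m.subtype ≠ 0 := by
    by_contra hcon
    push_neg at hcon
    have hker : sSup 𝒮 ≤ LinearMap.ker π := by
      refine sSup_le fun m hm => fun x hx => ?_
      have := congrFun (congrArg DFunLike.coe (hcon m hm)) ⟨x, hx⟩
      simpa using this
    haveI := hp
    haveI := IsSimpleModule.nontrivial A ↥p
    obtain ⟨u, hu⟩ := exists_ne (0 : ↥p)
    have h1 : π (u : W) = u := Submodule.linearProjOfIsCompl_apply_left hc u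
    have h2 : π (u : W) = 0 := hker (hle u.2)
    exact hu (by rw [← h1, h2])
  obtain ⟨m, hm, hne⟩ := hne
  haveI := hp
  haveI := h𝒮 m hm
  exact ⟨m, hm, ⟨LinearEquiv.ofBijective (π ∘ₗ m.subtype)
    (LinearMap.bijective_of_ne_zero hne)⟩⟩

theorem map_simple_le (d : W →ₗ[A] W) {m : Submodule A W} (hm : IsSimpleModule A m) :
    Submodule.map d m = ⊥ ∨ (IsSimpleModule A (Submodule.map d m) ∧
      Nonempty (↥m ≃ₗ[A] ↥(Submodule.map d m))) := by
  haveI := hm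
  set f : ↥m →ₗ[A] W := d ∘ₗ m.subtype with hf
  have hrange : LinearMap.range f = Submodule.map d m := by
    rw [hf, LinearMap.range_comp, Submodule.range_subtype]
  rcases f.injective_or_eq_zero with hinj | hzero
  · right
    have e : ↥m ≃ₗ[A] ↥(LinearMap.range f) := LinearEquiv.ofInjective f hinj
    rw [← hrange]
    exact ⟨IsSimpleModule.congr e.symm, ⟨e⟩⟩
  · left
    rw [← hrange, hzero, LinearMap.range_zero]

section proj
variable [IsSemisimpleModule A W]

theorem exists_isotypic_proj {S : Submodule A W} (hS : IsSimpleModule A ↥S) :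
    ∃ (e : W →ₗ[A] W) (P : Submodule A W),
      (∀ x, e x ∈ P) ∧ (∀ x ∈ P, e x = x) ∧
      (∀ d : W →ₗ[A] W, ∀ x, d (e x) = e (d x)) ∧
      S ≤ P ∧
      (∀ p : Submodule A W, IsSimpleModule A ↥p → p ≤ P → Nonempty (↥p ≃ₗ[A] ↥S)) := by
  classical
  set 𝒮p : Set (Submodule A W) :=
    {p | IsSimpleModule A ↥p ∧ Nonempty (↥p ≃ₗ[A] ↥S)} with h𝒮p
  set 𝒮n : Set (Submodule A W) :=
    {p | IsSimpleModule A ↥p ∧ ¬ Nonempty (↥p ≃ₗ[A] ↥S)} with h𝒮n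
  set P := sSup 𝒮p with hP
  set T := sSup 𝒮n with hT
  have hPT_sup : P ⊔ T = ⊤ := by
    refine le_antisymm le_top ?_
    rw [← IsSemisimpleModule.sSup_simples_eq_top A W]
    refine sSup_le fun p hp => ?_
    by_cases hiso : Nonempty (↥p ≃ₗ[A] ↥S)
    · exact le_sup_of_le_left (le_sSup ⟨hp, hiso⟩)
    · exact le_sup_of_le_right (le_sSup ⟨hp, hiso⟩)
  have hclassP : ∀ p : Submodule A W, IsSimpleModule A ↥p → p ≤ P →
      Nonempty (↥p ≃ₗ[A] ↥S) := by
    intro p hp hle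
    obtain ⟨m, hm, ⟨em⟩⟩ := simple_le_sSup_iso (fun m hm => hm.1) hp hle
    exact ⟨em.symm.trans (hm.2.some)⟩
  have hclassT : ∀ p : Submodule A W, IsSimpleModule A ↥p → p ≤ T →
      ¬ Nonempty (↥p ≃ₗ[A] ↥S) := by
    intro p hp hle ⟨epS⟩
    obtain ⟨m, hm, ⟨em⟩⟩ := simple_le_sSup_iso (fun m hm => hm.1) hp hle
    exact hm.2 ⟨em.trans epS⟩
  have hPT_inf : P ⊓ T = ⊥ := by
    rcases IsSemisimpleModule.eq_bot_or_exists_simple_le (P ⊓ T) with h | ⟨p, hple, hp⟩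
    · exact h
    · exact absurd (hclassP p hp (hple.trans inf_le_left))
        (hclassT p hp (hple.trans inf_le_right))
  have hc : IsCompl P T := ⟨disjoint_iff.mpr hPT_inf, codisjoint_iff.mpr hPT_sup⟩
  set e : W →ₗ[A] W := P.subtype ∘ₗ P.projectionOnto T hc with he
  have he_id : ∀ x ∈ P, e x = x := by
    intro x hx
    simp [he, Submodule.projectionOnto_apply_left hc ⟨x, hx⟩]
  have he_zero : ∀ x ∈ T, e x = 0 := by
    intro x hx
    simp [he, Submodule.projectionOnto_apply_right hc ⟨x, hx⟩]
  have he_mem : ∀ x, e x ∈ P := fun x => (P.projectionOnto T hc x).2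
  have hstab : ∀ (𝒮 : Set (Submodule A W)), (∀ m ∈ 𝒮, IsSimpleModule A ↥m) →
      (∀ m ∈ 𝒮, ∀ m' : Submodule A W, IsSimpleModule A ↥m' → Nonempty (↥m ≃ₗ[A] ↥m') →
        m' ∈ 𝒮) →
      ∀ d : W →ₗ[A] W, Submodule.map d (sSup 𝒮) ≤ sSup 𝒮 := by
    intro 𝒮 hsimple hclosed d
    rw [Submodule.map_le_iff_le_comap]
    refine sSup_le fun m hm => ?_
    rw [← Submodule.map_le_iff_le_comap]
    rcases map_simple_le d (hsimple m hm) with hbot | ⟨hsimple', ⟨em⟩⟩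
    · rw [hbot]; exact bot_le
    · exact le_sSup (hclosed m hm _ hsimple' ⟨em⟩)
  have hPstab : ∀ d : W →ₗ[A] W, Submodule.map d P ≤ P := by
    refine hstab 𝒮p (fun m hm => hm.1) ?_
    rintro m ⟨hm1, ⟨emS⟩⟩ m' hm' ⟨emm'⟩
    exact ⟨hm', ⟨emm'.symm.trans emS⟩⟩
  have hTstab : ∀ d : W →ₗ[A] W, Submodule.map d T ≤ T := by
    refine hstab 𝒮n (fun m hm => hm.1) ?_
    rintro m ⟨hm1, hm2⟩ m' hm' ⟨emm'⟩
    exact ⟨hm', fun ⟨em'S⟩ => hm2 ⟨emm'.trans em'S⟩⟩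
  have he_comm : ∀ d : W →ₗ[A] W, ∀ x, d (e x) = e (d x) := by
    intro d x
    have hx : x ∈ P ⊔ T := by rw [hPT_sup]; trivial
    obtain ⟨y, hy, z, hz, rfl⟩ := Submodule.mem_sup.mp hx
    have h1 : e (y + z) = y := by rw [map_add, he_id y hy, he_zero z hz, add_zero]
    have h2 : d y ∈ P := hPstab d ⟨y, hy, rfl⟩
    have h3 : d z ∈ T := hTstab d ⟨z, hz, rfl⟩
    rw [h1, map_add, map_add, he_id _ h2, he_zero _ h3, add_zero]
  exact ⟨e, P, he_mem, he_id, he_comm,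
    le_sSup ⟨hS, ⟨LinearEquiv.refl A ↥S⟩⟩, hclassP⟩

end proj
end

open LinearMap Module

universe u v

section main
variable {κ : Type*} [Field κ] [CharZero κ] {A : Type*} [Ring A] [Algebra κ A]

/-- Brauer-Nesbitt, char 0: the inductive core. -/
theorem bn_aux (n : ℕ) {M : Type u} {N : Type v}
    [AddCommGroup M] [Module κ M] [Module A M] [IsScalarTower κ A M]
    [FiniteDimensional κ M] [IsSemisimpleModule A M]
    [AddCommGroup N] [Module κ N] [Module A N] [IsScalarTower κ A N]
    [FiniteDimensional κ N] [IsSemisimpleModule A N]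
    (hn : finrank κ M ≤ n)
    (h : ∀ a : A, trace κ M (aSMul κ M a) = trace κ N (aSMul κ N a)) :
    Nonempty (M ≃ₗ[A] N) := by
  induction n generalizing M N with
  | zero =>
      have hid : aSMul κ M (1:A) = LinearMap.id := by
        ext x; exact one_smul A x
      have hid' : aSMul κ N (1:A) = LinearMap.id := by
        ext x; exact one_smul A x
      have h1 := h 1
      rw [hid, hid', trace_id, trace_id] at h1
      have hM0 : finrank κ M = 0 := Nat.le_zero.mp hn
      have hN0 : finrank κ N = 0 := by
        have hc : ((finrank κ N : ℕ) : κ) = ((0 : ℕ) : κ) := by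
          rw [← h1, hM0]
        exact_mod_cast hc
      haveI : Subsingleton M := finrank_zero_iff.mp hM0
      haveI : Subsingleton N := finrank_zero_iff.mp hN0
      exact ⟨LinearEquiv.ofLinear (0 : M →ₗ[A] N) (0 : N →ₗ[A] M)
        (LinearMap.ext fun x => Subsingleton.elim _ _)
        (LinearMap.ext fun x => Subsingleton.elim _ _)⟩
  | succ n ih =>
      rcases subsingleton_or_nontrivial M with hM | hM
      · have hM0 : finrank κ M = 0 := by
          rw [finrank_zero_iff]; exact hM
        exact ih (le_trans (le_of_eq hM0) (Nat.zero_le n)) h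
      -- M is nontrivial: find a simple submodule and match it inside N
      obtain ⟨S₀, hS₀⟩ := IsSemisimpleModule.exists_simple_submodule A M
      haveI := prod_semisimple (A := A) (W := M) (N' := N)
      set S : Submodule A (M × N) := S₀.map (LinearMap.inl A M N) with hSdef
      have hinl : Function.Injective (LinearMap.inl A M N) := LinearMap.inl_injective
      have eS₀S : ↥S₀ ≃ₗ[A] ↥S := Submodule.equivMapOfInjective _ hinl S₀
      haveI hS₀' := hS₀
      haveI hS : IsSimpleModule A ↥S := IsSimpleModule.congr eS₀S.symm
      obtain ⟨e, P, he_mem, he_id, he_comm, hSP, hclass⟩ := exists_isotypic_proj hS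
      obtain ⟨a, ha⟩ := density (e.restrictScalars κ)
        (fun d x => by simpa using he_comm d x)
      have ha' : ∀ x : M × N, a • x = e x := fun x => by simpa using ha x
      -- e preserves the two factors
      have hfst : ∀ m : M, e ((m, 0) : M × N) = ((e ((m, 0) : M × N)).1, 0) := by
        intro m
        have := he_comm (LinearMap.inl A M N ∘ₗ LinearMap.fst A M N) ((m, 0) : M × N)
        simpa using this.symm
      have hsnd : ∀ x : N, e ((0, x) : M × N) = (0, (e ((0, x) : M × N)).2) := by
        intro x
        have := he_comm (LinearMap.inr A M N ∘ₗ LinearMap.snd A M N) ((0, x) : M × N)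
        simpa using this.symm
      -- the induced projections on M and N are given by the action of a
      have haM : ∀ m : M, ((a • m : M), (0 : N)) = e ((m, 0) : M × N) := by
        intro m
        have h1 : a • ((m, 0) : M × N) = e ((m, 0) : M × N) := ha' _
        have h2 : a • ((m, 0) : M × N) = ((a • m : M), (0 : N)) := by
          rw [Prod.smul_mk, smul_zero]
        rw [← h1, h2]
      have haN : ∀ x : N, ((0 : M), (a • x : N)) = e ((0, x) : M × N) := by
        intro x
        have h1 : a • ((0, x) : M × N) = e ((0, x) : M × N) := ha' _
        have h2 : a • ((0, x) : M × N) = ((0 : M), (a • x : N)) := by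
          rw [Prod.smul_mk, smul_zero]
        rw [← h1, h2]
      -- projections onto the isotypic parts of M and N
      set pM : Submodule A M := P.comap (LinearMap.inl A M N) with hpM
      set pN : Submodule A N := P.comap (LinearMap.inr A M N) with hpN
      have hprojM : IsProj (pM.restrictScalars κ) (aSMul κ M a) := by
        constructor
        · intro m
          show (LinearMap.inl A M N) (a • m) ∈ P
          have : ((a • m : M), (0 : N)) ∈ P := haM m ▸ he_mem _
          simpa using this
        · intro m hm
          have hmem : ((m, 0) : M × N) ∈ P := hm
          have : e ((m, 0) : M × N) = (m, 0) := he_id _ hmem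
          have h2 := (haM m).trans this
          exact congrArg Prod.fst h2
      have hprojN : IsProj (pN.restrictScalars κ) (aSMul κ N a) := by
        constructor
        · intro x
          show (LinearMap.inr A M N) (a • x) ∈ P
          have : ((0 : M), (a • x : N)) ∈ P := haN x ▸ he_mem _
          simpa using this
        · intro x hx
          have hmem : ((0, x) : M × N) ∈ P := hx
          have : e ((0, x) : M × N) = (0, x) := he_id _ hmem
          have h2 := (haN x).trans this
          exact congrArg Prod.snd h2
      -- traces give equality of isotypic dimensions
      have htr := h a
      rw [hprojM.trace, hprojN.trace] at htr
      have hdim : finrank κ (pM.restrictScalars κ) = finrank κ (pN.restrictScalars κ) :=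
        Nat.cast_injective htr
      -- pM is nonzero since S₀ ≤ pM
      have hS₀pM : S₀ ≤ pM := by
        intro m hm
        exact hSP (Submodule.mem_map_of_mem hm)
      have hS₀ne : S₀ ≠ ⊥ := (isSimpleModule_iff_isAtom.mp hS₀).1
      have hpMne : pM ≠ ⊥ := fun hbot => hS₀ne (le_bot_iff.mp (hbot ▸ hS₀pM))
      have hpMpos : 0 < finrank κ (pM.restrictScalars κ) := by
        rw [finrank_pos_iff, Submodule.nontrivial_iff_ne_bot, Ne,
          Submodule.restrictScalars_eq_bot_iff]
        exact hpMne
      have hpNpos : 0 < finrank κ (pN.restrictScalars κ) := hdim ▸ hpMpos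
      have hpNne : pN ≠ ⊥ := by
        have := finrank_pos_iff.mp hpNpos
        rw [Submodule.nontrivial_iff_ne_bot, Ne, Submodule.restrictScalars_eq_bot_iff] at this
        exact this
      -- find a simple submodule of N isomorphic to S₀
      have hQle : pN.map (LinearMap.inr A M N) ≤ P := by
        rintro _ ⟨x, hx, rfl⟩
        exact hx
      have hQne : pN.map (LinearMap.inr A M N) ≠ ⊥ := by
        rw [Submodule.ne_bot_iff] at hpNne ⊢
        obtain ⟨x, hx, h0⟩ := hpNne
        exact ⟨LinearMap.inr A M N x, ⟨x, hx, rfl⟩, by simp [h0]⟩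
      obtain ⟨q, hqle, hq⟩ :=
        (IsSemisimpleModule.eq_bot_or_exists_simple_le (pN.map (LinearMap.inr A M N))).resolve_left hQne
      obtain ⟨eqS⟩ := hclass q hq (hqle.trans hQle)
      -- pull q back to N
      have hqrange : q ≤ LinearMap.range (LinearMap.inr A M N) := by
        refine hqle.trans ?_
        rintro _ ⟨x, hx, rfl⟩
        exact ⟨x, rfl⟩
      set q₀ : Submodule A N := q.comap (LinearMap.inr A M N) with hq₀def
      have hq₀map : q₀.map (LinearMap.inr A M N) = q := by
        rw [Submodule.map_comap_eq, inf_eq_right.mpr hqrange]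
      have eq₀q : ↥q₀ ≃ₗ[A] ↥q := by
        have := Submodule.equivMapOfInjective (LinearMap.inr A M N) LinearMap.inr_injective q₀
        rw [hq₀map] at this
        exact this
      haveI hq₀ : IsSimpleModule A ↥q₀ := IsSimpleModule.congr eq₀q
      have eq₀S₀ : ↥q₀ ≃ₗ[A] ↥S₀ := eq₀q.trans (eqS.trans eS₀S.symm)
      -- decompose and recurse
      obtain ⟨M', hcM⟩ := exists_isCompl S₀
      obtain ⟨N', hcN⟩ := exists_isCompl q₀
      haveI : FiniteDimensional κ ↥M' :=
        inferInstanceAs (FiniteDimensional κ (M'.restrictScalars κ))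
      haveI : FiniteDimensional κ ↥N' :=
        inferInstanceAs (FiniteDimensional κ (N'.restrictScalars κ))
      haveI : FiniteDimensional κ ↥S₀ :=
        inferInstanceAs (FiniteDimensional κ (S₀.restrictScalars κ))
      haveI : FiniteDimensional κ ↥q₀ :=
        inferInstanceAs (FiniteDimensional κ (q₀.restrictScalars κ))
      have hM'trace : ∀ b : A, trace κ ↥M' (aSMul κ ↥M' b) = trace κ ↥N' (aSMul κ ↥N' b) := by
        intro b
        have hdM := trace_aSMul_decomp (κ := κ) S₀ M' hcM b
        have hdN := trace_aSMul_decomp (κ := κ) q₀ N' hcN b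
        have hSq := trace_aSMul_congr (κ := κ) eq₀S₀.symm b
        have := h b
        rw [hdM, hdN, ← hSq] at this
        exact add_left_cancel this
      -- dimension bound
      have hrank : finrank κ ↥S₀ + finrank κ ↥M' = finrank κ M := by
        have E := (Submodule.prodEquivOfIsCompl S₀ M' hcM).restrictScalars κ
        rw [← LinearEquiv.finrank_eq E, finrank_prod]
      have hS₀pos : 0 < finrank κ ↥S₀ := by
        have : 0 < finrank κ (S₀.restrictScalars κ) := by
          rw [finrank_pos_iff, Submodule.nontrivial_iff_ne_bot, Ne,
            Submodule.restrictScalars_eq_bot_iff]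
          exact hS₀ne
        exact this
      have hM'le : finrank κ ↥M' ≤ n := by omega
      obtain ⟨F⟩ := ih hM'le hM'trace
      exact ⟨(Submodule.prodEquivOfIsCompl S₀ M' hcM).symm.trans
        ((LinearEquiv.prodCongr eq₀S₀.symm F).trans (Submodule.prodEquivOfIsCompl q₀ N' hcN))⟩
end main

section repapp
variable {κ : Type*} [Field κ] {Γ : Type*} [Group Γ]
  {V : Type*} [AddCommGroup V] [Module κ V] (ρ : Representation κ Γ V)

theorem asModule_tower : IsScalarTower κ (MonoidAlgebra κ Γ) ρ.asModule := by
  refine ⟨fun c a x => ?_⟩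
  apply ρ.asModuleEquiv.injective
  rw [ρ.asModuleEquiv_map_smul,
    show ρ.asModuleEquiv (c • (a • x)) = c • ρ.asModuleEquiv (a • x) from rfl,
    ρ.asModuleEquiv_map_smul, map_smul, LinearMap.smul_apply]

/-- the identity, as a κ-linear equivalence between `ρ.asModule` and `V`. -/
def asModuleLinEquiv : ρ.asModule ≃ₗ[κ] V :=
  { ρ.asModuleEquiv with map_smul' := fun _ _ => rfl }

theorem asModuleLinEquiv_smul (a : MonoidAlgebra κ Γ) (x : ρ.asModule) :
    asModuleLinEquiv ρ (a • x) = ρ.asAlgebraHom a (asModuleLinEquiv ρ x) :=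
  ρ.asModuleEquiv_map_smul a x
end repapp


/-- Two finite-dimensional semisimple representations of a finitely generated group over an
algebraically closed field of characteristic zero are isomorphic if and only if their
characters (traces) agree. -/
theorem stmt_0 {κ : Type*} [Field κ] [IsAlgClosed κ] [CharZero κ]
    {Γ : Type*} [Group Γ] [Group.FG Γ]
    {V₁ V₂ : Type*} [AddCommGroup V₁] [Module κ V₁] [FiniteDimensional κ V₁]
    [AddCommGroup V₂] [Module κ V₂] [FiniteDimensional κ V₂]
    (ρ₁ : Γ →* (V₁ ≃ₗ[κ] V₁)) (ρ₂ : Γ →* (V₂ ≃ₗ[κ] V₂))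
    (h₁ : IsSemisimpleModule (MonoidAlgebra κ Γ) (Representation.asModule
      (LinearEquiv.automorphismGroup.toLinearMapMonoidHom.comp ρ₁ : Representation κ Γ V₁)))
    (h₂ : IsSemisimpleModule (MonoidAlgebra κ Γ) (Representation.asModule
      (LinearEquiv.automorphismGroup.toLinearMapMonoidHom.comp ρ₂ : Representation κ Γ V₂))) :
    (∃ φ : V₁ ≃ₗ[κ] V₂, ∀ (g : Γ) (v : V₁), φ (ρ₁ g v) = ρ₂ g (φ v)) ↔
      ∀ g : Γ, LinearMap.trace κ V₁ (ρ₁ g : V₁ →ₗ[κ] V₁) =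
        LinearMap.trace κ V₂ (ρ₂ g : V₂ →ₗ[κ] V₂) := by
  constructor
  · rintro ⟨φ, hφ⟩ g
    have hconj : φ.conj (ρ₁ g : V₁ →ₗ[κ] V₁) = (ρ₂ g : V₂ →ₗ[κ] V₂) := by
      ext v
      simp [LinearEquiv.conj_apply, hφ]
    rw [← hconj, LinearMap.trace_conj']
  · intro hχ
    set A := MonoidAlgebra κ Γ with hA
    set ρ₁' : Representation κ Γ V₁ :=
      (LinearEquiv.automorphismGroup.toLinearMapMonoidHom.comp ρ₁) with hρ₁'
    set ρ₂' : Representation κ Γ V₂ :=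
      (LinearEquiv.automorphismGroup.toLinearMapMonoidHom.comp ρ₂) with hρ₂'
    haveI := h₁
    haveI := h₂
    haveI := asModule_tower ρ₁'
    haveI := asModule_tower ρ₂'
    haveI : FiniteDimensional κ ρ₁'.asModule := inferInstanceAs (FiniteDimensional κ V₁)
    haveI : FiniteDimensional κ ρ₂'.asModule := inferInstanceAs (FiniteDimensional κ V₂)
    have hρ₁app : ∀ (g : Γ) (v : V₁), ρ₁' g v = ρ₁ g v := fun g v => rfl
    have hρ₂app : ∀ (g : Γ) (v : V₂), ρ₂' g v = ρ₂ g v := fun g v => rfl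
    -- traces of algebra elements agree
    have halg : ∀ a : A,
        trace κ V₁ (ρ₁'.asAlgebraHom a) = trace κ V₂ (ρ₂'.asAlgebraHom a) := by
      have : (trace κ V₁) ∘ₗ ρ₁'.asAlgebraHom.toLinearMap
          = (trace κ V₂) ∘ₗ ρ₂'.asAlgebraHom.toLinearMap := by
        refine MonoidAlgebra.lhom_ext' fun g => ?_
        refine LinearMap.ext_ring ?_
        simp only [LinearMap.coe_comp, Function.comp_apply, AlgHom.toLinearMap_apply,
          LinearMap.coe_smulRight, LinearMap.id_coe, id_eq, one_smul]
        rw [show ((MonoidAlgebra.lsingle g) (1:κ) : A) = MonoidAlgebra.single g (1:κ) from rfl,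
          Representation.asAlgebraHom_single, Representation.asAlgebraHom_single,
          one_smul, one_smul]
        exact hχ g
      intro a
      exact DFunLike.congr_fun this a
    have htr : ∀ a : A, trace κ ρ₁'.asModule (aSMul κ ρ₁'.asModule a)
        = trace κ ρ₂'.asModule (aSMul κ ρ₂'.asModule a) := by
      intro a
      have e₁ : (asModuleLinEquiv ρ₁').conj (aSMul κ ρ₁'.asModule a)
          = ρ₁'.asAlgebraHom a := by
        ext v
        rw [LinearEquiv.conj_apply]
        simp only [LinearMap.coe_comp, Function.comp_apply, LinearEquiv.coe_coe]
        rw [show (aSMul κ ρ₁'.asModule a) ((asModuleLinEquiv ρ₁').symm v)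
            = a • ((asModuleLinEquiv ρ₁').symm v) from rfl]
        rw [asModuleLinEquiv_smul, LinearEquiv.apply_symm_apply]
      have e₂ : (asModuleLinEquiv ρ₂').conj (aSMul κ ρ₂'.asModule a)
          = ρ₂'.asAlgebraHom a := by
        ext v
        rw [LinearEquiv.conj_apply]
        simp only [LinearMap.coe_comp, Function.comp_apply, LinearEquiv.coe_coe]
        rw [show (aSMul κ ρ₂'.asModule a) ((asModuleLinEquiv ρ₂').symm v)
            = a • ((asModuleLinEquiv ρ₂').symm v) from rfl]
        rw [asModuleLinEquiv_smul, LinearEquiv.apply_symm_apply]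
      rw [← LinearMap.trace_conj' (aSMul κ ρ₁'.asModule a) (asModuleLinEquiv ρ₁'),
        ← LinearMap.trace_conj' (aSMul κ ρ₂'.asModule a) (asModuleLinEquiv ρ₂'),
        e₁, e₂]
      exact halg a
    obtain ⟨F⟩ := bn_aux (κ := κ) (A := A) (finrank κ ρ₁'.asModule) le_rfl htr
    refine ⟨(asModuleLinEquiv ρ₁').symm.trans ((F.restrictScalars κ).trans
      (asModuleLinEquiv ρ₂')), fun g v => ?_⟩
    simp only [LinearEquiv.trans_apply, LinearEquiv.restrictScalars_apply]
    have hkey : ∀ w : V₁, (asModuleLinEquiv ρ₁').symm (ρ₁ g w)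
        = (MonoidAlgebra.of κ Γ g : A) • ((asModuleLinEquiv ρ₁').symm w) :=
      fun w => ρ₁'.asModuleEquiv_symm_map_rho g w
    have hkey₂ : ∀ y : ρ₂'.asModule, asModuleLinEquiv ρ₂' ((MonoidAlgebra.of κ Γ g : A) • y)
        = ρ₂ g (asModuleLinEquiv ρ₂' y) := by
      intro y
      rw [asModuleLinEquiv_smul, Representation.asAlgebraHom_of]
      rfl
    rw [hkey v, map_smul, hkey₂]
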